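/- Let A be a unital C*-algebra, K a complex Hilbert space, α : A → B(K) a unital positive linear map, and ξ ∈ K. If a ∈ A satisfies ⟨ξ, α(a*a)ξ⟩ = 0 and ⟨ξ, α(aa*)ξ⟩ = 0, then α(a)ξ = 0. -/

import Mathlib

open scoped ComplexInnerProductSpace ComplexOrder

set_option synthInstance.maxHeartbeats 1000000
set_option maxHeartbeats 1000000

/-- A positive operator with vanishing quadratic form at `ξ` kills `ξ`. -/
lemma aux_pos_op_kills {K : Type*} [NormedAddCommGroup K] [InnerProductSpace ℂ K]
    [CompleteSpace K] (P : K →L[ℂ] K) (hP : 0 ≤ P) (ξ : K)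
    (h : ⟪ξ, P ξ⟫ = 0) : P ξ = 0 := by
  have hS0 : 0 ≤ CFC.sqrt P := CFC.sqrt_nonneg P
  have hSS : CFC.sqrt P * CFC.sqrt P = P := CFC.sqrt_mul_sqrt_self P hP
  have hsa : IsSelfAdjoint (CFC.sqrt P) := IsSelfAdjoint.of_nonneg hS0
  have hsymm := (ContinuousLinearMap.isSelfAdjoint_iff_isSymmetric.mp hsa)
  have h3 : CFC.sqrt P (CFC.sqrt P ξ) = P ξ := by
    rw [← ContinuousLinearMap.mul_apply, hSS]
  have hz : ⟪CFC.sqrt P ξ, CFC.sqrt P ξ⟫ = 0 := by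
    have h2 : ⟪CFC.sqrt P ξ, CFC.sqrt P ξ⟫ = ⟪ξ, CFC.sqrt P (CFC.sqrt P ξ)⟫ := hsymm ξ _
    rw [h2, h3, h]
  have hSxi : CFC.sqrt P ξ = 0 := inner_self_eq_zero.mp hz
  rw [← h3, hSxi, map_zero]

lemma aux_inner_nonneg {K : Type*} [NormedAddCommGroup K] [InnerProductSpace ℂ K]
    [CompleteSpace K] (T : K →L[ℂ] K) (hT : 0 ≤ T) (ξ : K) : 0 ≤ ⟪ξ, T ξ⟫ := by
  rw [ContinuousLinearMap.nonneg_iff_isPositive] at hT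
  obtain ⟨heq, hre⟩ := (ContinuousLinearMap.isPositive_iff_complex T).mp hT ξ
  have hc : ⟪ξ, T ξ⟫ = starRingEnd ℂ ⟪T ξ, ξ⟫ := (inner_conj_symm _ _).symm
  rw [hc, ← heq, Complex.conj_ofReal]
  exact Complex.zero_le_real.mpr hre

theorem stmt6
    {A : Type*} [NormedRing A] [StarRing A] [CStarRing A] [NormedAlgebra ℂ A]
    [CompleteSpace A] [PartialOrder A] [StarOrderedRing A] [StarModule ℂ A]
    {K : Type*} [NormedAddCommGroup K] [InnerProductSpace ℂ K] [CompleteSpace K]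
    (α : A →ₗ[ℂ] (K →L[ℂ] K))
    (h_unital : α 1 = 1)
    (h_pos : ∀ a : A, 0 ≤ a → 0 ≤ α a)
    (ξ : K) (a : A)
    (h1 : ⟪ξ, (α (star a * a)) ξ⟫ = 0)
    (h2 : ⟪ξ, (α (a * star a)) ξ⟫ = 0) :
    (α a) ξ = 0 := by
  letI : CStarAlgebra A := { }
  by_cases hξ : ξ = 0
  · simp [hξ]
  have hφ : ∀ p : A, 0 ≤ p → 0 ≤ ⟪ξ, α p ξ⟫ := fun p hp =>
    aux_inner_nonneg (α p) (h_pos p hp) ξ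
  have hII : ∀ x : A, (-Complex.I) • ((-Complex.I) • x) = -x := fun x => by
    rw [smul_smul, neg_mul_neg, Complex.I_mul_I, neg_smul, one_smul]
  have subkey : ∀ q : A, 0 ≤ q → ⟪ξ, α (q * q) ξ⟫ = 0 → α q ξ = 0 := by
    intro q hq hqq
    have hreal : 0 ≤ ⟪ξ, α q ξ⟫ := hφ q hq
    set r : ℝ := (⟪ξ, α q ξ⟫).re with hr
    obtain ⟨hr0, him0⟩ := Complex.nonneg_iff.mp hreal
    have him : (⟪ξ, α q ξ⟫) = (r : ℂ) := Complex.ext rfl (by simp [← him0])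
    have key : ∀ t : ℝ, 0 ≤ t → 2 * t * r ≤ t ^ 2 * ‖ξ‖ ^ 2 := by
      intro t ht
      set s : A := (t : ℂ) • 1 - q with hs
      have hssa : star s = s := by
        simp [hs, star_smul, star_sub, Complex.star_def, Complex.conj_ofReal,
          (IsSelfAdjoint.of_nonneg hq).star_eq]
      have hs0 : 0 ≤ s * s := by
        have := star_mul_self_nonneg s; rwa [hssa] at this
      have hexp : s * s = ((t : ℂ) ^ 2) • (1 : A) - ((2 * t : ℝ) : ℂ) • q + q * q := by
        simp only [hs, sub_mul, mul_sub, smul_mul_assoc, mul_smul_comm, smul_smul, one_mul,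
          mul_one]
        push_cast
        module
      have hkey := hφ _ hs0
      rw [hexp, map_add, map_sub, map_smul, map_smul, h_unital] at hkey
      simp only [ContinuousLinearMap.add_apply, ContinuousLinearMap.sub_apply,
        ContinuousLinearMap.coe_smul', Pi.smul_apply, ContinuousLinearMap.one_apply,
        inner_add_right, inner_sub_right, inner_smul_right] at hkey
      have hnorm : (⟪ξ, ξ⟫ : ℂ) = ((‖ξ‖ ^ 2 : ℝ) : ℂ) := by
        rw [inner_self_eq_norm_sq_to_K]; norm_cast
      rw [hqq, him, hnorm] at hkey
      have hcast : ((t ^ 2 * ‖ξ‖ ^ 2 - 2 * t * r : ℝ) : ℂ)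
          = (t : ℂ) ^ 2 * ((‖ξ‖ ^ 2 : ℝ) : ℂ) - ((2 * t : ℝ) : ℂ) * (r : ℂ) + 0 := by
        push_cast; ring
      rw [← hcast] at hkey
      have := Complex.zero_le_real.mp hkey
      linarith
    have hrz : r = 0 := by
      rcases eq_or_lt_of_le hr0 with h | h
      · exact h.symm
      · have hn : (0 : ℝ) < ‖ξ‖ ^ 2 := pow_pos (norm_pos_iff.mpr hξ) 2
        have hk := key (r / ‖ξ‖ ^ 2) (le_of_lt (div_pos h hn))
        have hk2 := mul_le_mul_of_nonneg_right hk hn.le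
        have e1 : 2 * (r / ‖ξ‖ ^ 2) * r * ‖ξ‖ ^ 2 = 2 * r ^ 2 := by
          field_simp
        have e2 : (r / ‖ξ‖ ^ 2) ^ 2 * ‖ξ‖ ^ 2 * ‖ξ‖ ^ 2 = r ^ 2 := by
          field_simp
        rw [e1, e2] at hk2
        nlinarith
    exact aux_pos_op_kills (α q) (h_pos q hq) ξ (by rw [him, hrz]; simp)
  have key2 : ∀ b : A, IsSelfAdjoint b → ⟪ξ, α (b * b) ξ⟫ = 0 → α b ξ = 0 := by
    intro b hb hbb
    have hsplit : b * b = b⁺ * b⁺ + b⁻ * b⁻ := by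
      conv_lhs => rw [← CFC.posPart_sub_negPart b hb]
      simp only [sub_mul, mul_sub, CFC.posPart_mul_negPart, CFC.negPart_mul_posPart,
        sub_zero, zero_sub]
      abel
    have hpsq : 0 ≤ b⁺ * b⁺ := by
      have := star_mul_self_nonneg b⁺
      rwa [(IsSelfAdjoint.of_nonneg (CFC.posPart_nonneg b)).star_eq] at this
    have hnsq : 0 ≤ b⁻ * b⁻ := by
      have := star_mul_self_nonneg b⁻
      rwa [(IsSelfAdjoint.of_nonneg (CFC.negPart_nonneg b)).star_eq] at this
    have hsum : ⟪ξ, α (b⁺ * b⁺) ξ⟫ + ⟪ξ, α (b⁻ * b⁻) ξ⟫ = 0 := by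
      rw [← inner_add_right, ← ContinuousLinearMap.add_apply, ← map_add, ← hsplit]
      exact hbb
    obtain ⟨hz1, hz2⟩ := (add_eq_zero_iff_of_nonneg (hφ _ hpsq) (hφ _ hnsq)).mp hsum
    have e1 : α b⁺ ξ = 0 := subkey _ (CFC.posPart_nonneg b) hz1
    have e2 : α b⁻ ξ = 0 := subkey _ (CFC.negPart_nonneg b) hz2
    rw [← CFC.posPart_sub_negPart b hb, map_sub, ContinuousLinearMap.sub_apply, e1, e2,
      sub_zero]
  set b : A := a + star a with hbdef
  set c : A := (-Complex.I) • (a - star a) with hcdef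
  have hbsa : IsSelfAdjoint b := by
    rw [IsSelfAdjoint, hbdef, star_add, star_star, add_comm]
  have hcsa : IsSelfAdjoint c := by
    rw [IsSelfAdjoint, hcdef, star_smul, star_sub, star_star, Complex.star_def, map_neg,
      Complex.conj_I, neg_neg]
    module
  have hcc : c * c = -((a - star a) * (a - star a)) := by
    rw [hcdef, smul_mul_assoc, mul_smul_comm, hII]
  have hbc : b * b + c * c = (2 : ℂ) • (star a * a + a * star a) := by
    rw [hbdef, hcc]
    simp only [add_mul, mul_add, sub_mul, mul_sub]
    module
  have hsum0 : ⟪ξ, α (b * b) ξ⟫ + ⟪ξ, α (c * c) ξ⟫ = 0 := by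
    rw [← inner_add_right, ← ContinuousLinearMap.add_apply, ← map_add, hbc, map_smul]
    simp only [ContinuousLinearMap.coe_smul', Pi.smul_apply, inner_smul_right]
    rw [map_add]
    simp only [ContinuousLinearMap.add_apply, inner_add_right, h1, h2]
    simp
  have hbb0 : 0 ≤ ⟪ξ, α (b * b) ξ⟫ := hφ _ (by
    have := star_mul_self_nonneg b; rwa [hbsa.star_eq] at this)
  have hcc0 : 0 ≤ ⟪ξ, α (c * c) ξ⟫ := hφ _ (by
    have := star_mul_self_nonneg c; rwa [hcsa.star_eq] at this)
  obtain ⟨hz1, hz2⟩ := (add_eq_zero_iff_of_nonneg hbb0 hcc0).mp hsum0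
  have eb : α b ξ = 0 := key2 b hbsa hz1
  have ec : α c ξ = 0 := key2 c hcsa hz2
  have ha : a = (2 : ℂ)⁻¹ • (b + Complex.I • c) := by
    rw [hbdef, hcdef, smul_smul, mul_neg, Complex.I_mul_I, neg_neg, one_smul]
    module
  rw [ha, map_smul, map_add, map_smul]
  simp [eb, ec]
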